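/- A triple (x*, y*, σ*) is a variational generalized Nash equilibrium (v-GNE) of the extended game if and only if there exists λ* ∈ ℝ^m_{≥0} such that (x*, y*, σ*, 0_n, λ*) ∈ zer T. Moreover, for any (x*, y*, σ*, μ*, λ*) ∈ zer T one necessarily has μ* = 0_n, σ* = M_n x*, and y_i* = A_i x_i* − b_i for all i. -/
import Mathlib


noncomputable section

open Matrix Finset Filter

/-- A vector in `ℝ^k`. -/
abbrev Vec (k : ℕ) := Fin k → ℝ

/-- A block vector in `ℝ^{kN}` (N blocks of size k). -/
abbrev VecN (N k : ℕ) := Fin N → Vec k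

/-- Standard inner product on `ℝ^k`. -/
def dot {k : ℕ} (u v : Vec k) : ℝ := ∑ j, u j * v j

/-- Standard inner product on `ℝ^{kN}`. -/
def dotN {N k : ℕ} (u v : VecN N k) : ℝ := ∑ i, dot (u i) (v i)

/-- Subdifferential of `g : ℝ^p → ℝ` at `x`. -/
def subdiff {p : ℕ} (g : Vec p → ℝ) (x : Vec p) : Set (Vec p) :=
  {v | ∀ z, g x + dot v (z - x) ≤ g z}

/-- Normal cone of `S ⊆ ℝ^p` at `x` (empty if `x ∉ S`). -/
def normalCone {p : ℕ} (S : Set (Vec p)) (x : Vec p) : Set (Vec p) :=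
  {v | x ∈ S ∧ ∀ z ∈ S, dot v (z - x) ≤ 0}

/-- The nonnegative orthant `ℝ^m_{≥0}`. -/
def orthant (m : ℕ) : Set (Vec m) := {v | ∀ j, 0 ≤ v j}

/-- Euclidean projection onto the nonnegative orthant. -/
def projPos {m : ℕ} (v : Vec m) : Vec m := fun j => max (v j) 0

/-- `M x = (1/N) Σ_i x_i` (the averaging map `M_n`, resp. its `m`-dim analogue). -/
def Mavg {N k : ℕ} (x : VecN N k) : Vec k := (N : ℝ)⁻¹ • ∑ i, x i

/-- `P y = Σ_i y_i`. -/
def Psum {N k : ℕ} (y : VecN N k) : Vec k := ∑ i, y i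

/-- `Mᵀ μ` : transpose of the averaging map. -/
def MavgT (N : ℕ) {k : ℕ} (μ : Vec k) : VecN N k := fun _ => (N : ℝ)⁻¹ • μ

/-- `Pᵀ λ` : transpose of the summing map. -/
def PsumT (N : ℕ) {k : ℕ} (l : Vec k) : VecN N k := fun _ => l

/-- Monotonicity of a set-valued map w.r.t. an inner product `ip`. -/
def MonoOn {V : Type} [AddCommGroup V] (ip : V → V → ℝ) (F : V → Set V) : Prop :=
  ∀ ω ω' u v, u ∈ F ω → v ∈ F ω' → 0 ≤ ip (u - v) (ω - ω')

/-- Maximal monotonicity of a set-valued map w.r.t. an inner product `ip`. -/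
def MaxMonoOn {V : Type} [AddCommGroup V] (ip : V → V → ℝ) (F : V → Set V) : Prop :=
  MonoOn ip F ∧ ∀ ω u, (∀ ω' v, v ∈ F ω' → 0 ≤ ip (u - v) (ω - ω')) → u ∈ F ω

/-- `A x = Σ_i A_i x_i` for `A = [A_1 ⋯ A_N]`. -/
def bigA {N n m : ℕ} (A : Fin N → Matrix (Fin m) (Fin n) ℝ) (x : VecN N n) : Vec m :=
  ∑ i, (A i).mulVec (x i)

/-- The collective feasible set `𝒳 = (∏_i Ω_i) ∩ {x : A x ≤ b}`. -/
def Xfeas {N n m : ℕ} (Ω : Fin N → Set (Vec n)) (A : Fin N → Matrix (Fin m) (Fin n) ℝ)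
    (b : Fin N → Vec m) : Set (VecN N n) :=
  {x | (∀ i, x i ∈ Ω i) ∧ ∀ j, bigA A x j ≤ (∑ i, b i) j}

/-- Extended pseudo-subdifferential `F_e(x, σ)`. -/
def Fe {N n : ℕ} (f : Fin N → Vec n → Vec n → ℝ) (x : VecN N n) (σ : Vec n) :
    Set (VecN N n) :=
  {g | ∀ i, g i ∈ subdiff (fun z => f i z σ) (x i)}

/-- Aggregative pseudo-subdifferential `F_a(x) = F_e(x, M_n x)`. -/
def Fa {N n : ℕ} (f : Fin N → Vec n → Vec n → ℝ) (x : VecN N n) : Set (VecN N n) :=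
  Fe f x (Mavg x)

/-- `x̄` is a variational generalized aggregative equilibrium (v-GAE):
it solves GVI(𝒳, F_a). -/
def isVGAE {N n m : ℕ} (Ω : Fin N → Set (Vec n)) (f : Fin N → Vec n → Vec n → ℝ)
    (A : Fin N → Matrix (Fin m) (Fin n) ℝ) (b : Fin N → Vec m) (xbar : VecN N n) : Prop :=
  xbar ∈ Xfeas Ω A b ∧ ∃ g ∈ Fa f xbar, ∀ x ∈ Xfeas Ω A b, 0 ≤ dotN g (x - xbar)

/-- The local constraint set `C = {(x,y) : x_i ∈ Ω_i, y_i = A_i x_i - b_i}`. -/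
def Cset {N n m : ℕ} (Ω : Fin N → Set (Vec n)) (A : Fin N → Matrix (Fin m) (Fin n) ℝ)
    (b : Fin N → Vec m) : Set (VecN N n × VecN N m) :=
  {p | ∀ i, p.1 i ∈ Ω i ∧ p.2 i = (A i).mulVec (p.1 i) - b i}

/-- Inner product on `ℝ^{nN} × ℝ^{mN}`. -/
def ip2 {N n m : ℕ} (p q : VecN N n × VecN N m) : ℝ := dotN p.1 q.1 + dotN p.2 q.2

/-- Normal cone in `ℝ^{nN} × ℝ^{mN}` (empty outside the set). -/
def nconeC {N n m : ℕ} (C : Set (VecN N n × VecN N m)) (p : VecN N n × VecN N m) :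
    Set (VecN N n × VecN N m) :=
  {v | p ∈ C ∧ ∀ q ∈ C, ip2 v (q - p) ≤ 0}

/-- Inner product on `ℝ^{nN} × ℝ^{mN} × ℝ^n`. -/
def ip3 {N n m : ℕ} (p q : VecN N n × VecN N m × Vec n) : ℝ :=
  dotN p.1 q.1 + dotN p.2.1 q.2.1 + dot p.2.2 q.2.2

/-- Coupling constraint set `𝒱` of the extended game. -/
def Vfeas (N n m : ℕ) : Set (VecN N n × VecN N m × Vec n) :=
  {w | (∀ j, Psum w.2.1 j ≤ 0) ∧ w.2.2 = Mavg w.1}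

/-- The operator `𝒰(x,y,σ) = {(g + u, w, 0) : g ∈ F_e(x,σ), (u,w) ∈ N_C(x,y)}`. -/
def Uop {N n m : ℕ} (Ω : Fin N → Set (Vec n)) (f : Fin N → Vec n → Vec n → ℝ)
    (A : Fin N → Matrix (Fin m) (Fin n) ℝ) (b : Fin N → Vec m)
    (x : VecN N n) (y : VecN N m) (σ : Vec n) : Set (VecN N n × VecN N m × Vec n) :=
  {h | ∃ g ∈ Fe f x σ, ∃ uw ∈ nconeC (Cset Ω A b) (x, y), h = (g + uw.1, uw.2, 0)}

/-- `(x,y,σ)` is a v-GNE of the extended game: it solves GVI(𝒱, 𝒰). -/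
def isVGNEext {N n m : ℕ} (Ω : Fin N → Set (Vec n)) (f : Fin N → Vec n → Vec n → ℝ)
    (A : Fin N → Matrix (Fin m) (Fin n) ℝ) (b : Fin N → Vec m)
    (x : VecN N n) (y : VecN N m) (σ : Vec n) : Prop :=
  (x, y, σ) ∈ Vfeas N n m ∧
    ∃ h ∈ Uop Ω f A b x y σ, ∀ w ∈ Vfeas N n m, 0 ≤ ip3 h (w - (x, y, σ))

/-- The extended space `ℝ^d = ℝ^{nN} × ℝ^{mN} × ℝ^n × ℝ^n × ℝ^m`. -/
abbrev St (N n m : ℕ) := VecN N n × VecN N m × Vec n × Vec n × Vec m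

/-- Inner product on the extended space. -/
def ipS {N n m : ℕ} (u v : St N n m) : ℝ :=
  dotN u.1 v.1 + dotN u.2.1 v.2.1 + dot u.2.2.1 v.2.2.1 + dot u.2.2.2.1 v.2.2.2.1 +
    dot u.2.2.2.2 v.2.2.2.2

/-- `(x,y,σ,μ,λ) ∈ zer T` for the KKT operator `T`. -/
def inZerT {N n m : ℕ} (Ω : Fin N → Set (Vec n)) (f : Fin N → Vec n → Vec n → ℝ)
    (A : Fin N → Matrix (Fin m) (Fin n) ℝ) (b : Fin N → Vec m)
    (x : VecN N n) (y : VecN N m) (σ μ : Vec n) (lam : Vec m) : Prop :=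
  ∃ g ∈ Fe f x σ, ∃ uw ∈ nconeC (Cset Ω A b) (x, y), ∃ v ∈ normalCone (orthant m) lam,
    g + uw.1 - MavgT N μ = 0 ∧ uw.2 + PsumT N lam = 0 ∧ μ = 0 ∧ Mavg x - σ = 0 ∧
      v - Psum y = 0

/-- Inner product on `ℝ^{nN} × ℝ^n`. -/
def ipXs {N n : ℕ} (p q : VecN N n × Vec n) : ℝ := dotN p.1 q.1 + dot p.2 q.2

/-- The extended pseudo-subdifferential map `(x,σ) ↦ F_e(x,σ) × {0}`. -/
def FeExt {N n : ℕ} (f : Fin N → Vec n → Vec n → ℝ) (p : VecN N n × Vec n) :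
    Set (VecN N n × Vec n) :=
  {q | q.1 ∈ Fe f p.1 p.2 ∧ q.2 = 0}

/-- The operator `𝒜(x,y,σ,μ,λ) = (F_e(x,σ) + N_C(x,y)-part, 0, 0, 0)`. -/
def Aop {N n m : ℕ} (Ω : Fin N → Set (Vec n)) (f : Fin N → Vec n → Vec n → ℝ)
    (A : Fin N → Matrix (Fin m) (Fin n) ℝ) (b : Fin N → Vec m) (ω : St N n m) :
    Set (St N n m) :=
  {t | ∃ g ∈ Fe f ω.1 ω.2.2.1, ∃ uw ∈ nconeC (Cset Ω A b) (ω.1, ω.2.1),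
    t = (g + uw.1, uw.2, 0, 0, 0)}

/-- The skew-symmetric linear map `S`. -/
def Smap {N n m : ℕ} (ω : St N n m) : St N n m :=
  (-MavgT N ω.2.2.2.1, PsumT N ω.2.2.2.2, ω.2.2.2.1, Mavg ω.1 - ω.2.2.1, -Psum ω.2.1)

/-- The operator `ℬ = S + (0,0,0,0, N_{ℝ^m_{≥0}})`. -/
def Bop {N n m : ℕ} (ω : St N n m) : Set (St N n m) :=
  {t | ∃ v ∈ normalCone (orthant m) ω.2.2.2.2, t = Smap ω + (0, 0, 0, 0, v)}

/-- The block-diagonal positive-definite step-size matrix `Γ` acting on the extended space. -/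
def GammaMap {N n m : ℕ} (γ : Fin N → ℝ) (α β δ : ℝ) (ω : St N n m) : St N n m :=
  (fun i => γ i • ω.1 i, fun i => γ i • ω.2.1 i, α • ω.2.2.1, β • ω.2.2.2.1,
    δ • ω.2.2.2.2)

section Aux

lemma dot_zero' {k} (u : Vec k) : dot u 0 = 0 := by simp [dot]
lemma zero_dot' {k} (u : Vec k) : dot 0 u = 0 := by simp [dot]
lemma dot_sub' {k} (u a b : Vec k) : dot u (a - b) = dot u a - dot u b := by
  simp [dot, mul_sub, Finset.sum_sub_distrib]
lemma dot_comm' {k} (u v : Vec k) : dot u v = dot v u := by simp [dot, mul_comm]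
lemma neg_dot' {k} (u v : Vec k) : dot (-u) v = -dot u v := by
  simp [dot, Finset.sum_neg_distrib]

lemma dotN_zero' {N k} (u : VecN N k) : dotN u 0 = 0 := by simp [dotN, dot_zero']
lemma zero_dotN' {N k} (u : VecN N k) : dotN 0 u = 0 := by simp [dotN, zero_dot']
lemma dotN_neg' {N k} (u v : VecN N k) : dotN u (-v) = -dotN u v := by
  simp [dotN, dot, Finset.sum_neg_distrib]

def sgl {k : ℕ} (j : Fin k) (t : ℝ) : Vec k := fun j' => if j' = j then t else 0

lemma dot_sgl {k} (u : Vec k) (j : Fin k) (t : ℝ) : dot u (sgl j t) = u j * t := by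
  simp [dot, sgl, mul_ite, Finset.sum_ite_eq']

lemma dotN_self_nonneg' {N k} (u : VecN N k) : 0 ≤ dotN u u :=
  Finset.sum_nonneg fun i _ => Finset.sum_nonneg fun j _ => mul_self_nonneg _

lemma eq_zero_of_dotN_self {N k} (u : VecN N k) (h : dotN u u ≤ 0) : u = 0 := by
  have h0 : dotN u u = 0 := le_antisymm h (dotN_self_nonneg' u)
  funext i j
  have h1 := (Finset.sum_eq_zero_iff_of_nonneg (fun i _ =>
    Finset.sum_nonneg fun j _ => mul_self_nonneg (u i j))).mp h0 i (mem_univ i)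
  have h2 := (Finset.sum_eq_zero_iff_of_nonneg (fun j _ =>
    mul_self_nonneg (u i j))).mp h1 j (mem_univ j)
  exact mul_self_eq_zero.mp h2

lemma dot_psum {N m} (c : Vec m) (y : VecN N m) : (∑ i, dot c (y i)) = dot c (Psum y) := by
  simp [dot, Psum, Finset.mul_sum]
  exact Finset.sum_comm

lemma psum_apply {N m} (y : VecN N m) (j : Fin m) : Psum y j = ∑ i, y i j := by
  simp [Psum]

lemma mavgT_zero (N : ℕ) {k : ℕ} : MavgT N (0 : Vec k) = 0 := by
  funext i j; simp [MavgT]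

end Aux
/-- `(x*,y*,σ*)` is a v-GNE of the extended game iff there is `λ* ≥ 0`
with `(x*,y*,σ*,0,λ*) ∈ zer T`; moreover any zero of `T` has `μ* = 0`, `σ* = M_n x*`
and `y_i* = A_i x_i* - b_i`. -/
theorem stmt1 {N n m : ℕ} (hN : 0 < N) (hn : 0 < n) (hm : 0 < m)
    (Ω : Fin N → Set (Vec n)) (f : Fin N → Vec n → Vec n → ℝ)
    (A : Fin N → Matrix (Fin m) (Fin n) ℝ) (b : Fin N → Vec m)
    (hΩne : ∀ i, (Ω i).Nonempty) (hΩcp : ∀ i, IsCompact (Ω i))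
    (hΩcv : ∀ i, Convex ℝ (Ω i))
    (hfcont : ∀ i, Continuous (fun p : Vec n × Vec n => f i p.1 p.2))
    (hfconv : ∀ i w, ConvexOn ℝ Set.univ (fun z => f i z w))
    (slater : ∃ x0 : VecN N n, (∀ i, x0 i ∈ Ω i) ∧ ∀ j, bigA A x0 j < (∑ i, b i) j) :
    (∀ (x : VecN N n) (y : VecN N m) (σ : Vec n),
      isVGNEext Ω f A b x y σ ↔
        ∃ lam : Vec m, (∀ j, 0 ≤ lam j) ∧ inZerT Ω f A b x y σ (0 : Vec n) lam) ∧
    (∀ (x : VecN N n) (y : VecN N m) (σ μ : Vec n) (lam : Vec m),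
      inZerT Ω f A b x y σ μ lam →
        μ = 0 ∧ σ = Mavg x ∧ ∀ i, y i = (A i).mulVec (x i) - b i) := by
  constructor
  · intro x y σ
    constructor
    · rintro ⟨⟨hPy, hσ⟩, h, ⟨g, hg, uw, huw, rfl⟩, hvi⟩
      -- generic y-direction consequence of the VI
      have hviY : ∀ d : VecN N m, (∀ j', Psum (y + d) j' ≤ 0) → 0 ≤ dotN uw.2 d := by
        intro d hd
        have hmem : ((x, y + d, σ) : VecN N n × VecN N m × Vec n) ∈ Vfeas N n m := ⟨hd, hσ⟩
        have h := hvi _ hmem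
        simp only [ip3] at h
        have e1 : ((x, y + d, σ) : VecN N n × VecN N m × Vec n) - (x, y, σ)
            = (0, d, 0) := by
          ext <;> simp
        rw [e1] at h
        simpa [dotN_zero', dot_zero', zero_dot'] using h
      -- Step A : g + uw.1 = 0
      have hGzero : g + uw.1 = 0 := by
        apply eq_zero_of_dotN_self
        have hmem : ((x - (g + uw.1), y, Mavg (x - (g + uw.1))) :
            VecN N n × VecN N m × Vec n) ∈ Vfeas N n m := ⟨hPy, rfl⟩
        have h := hvi _ hmem
        simp only [ip3] at h
        have e1 : ((x - (g + uw.1), y, Mavg (x - (g + uw.1))) :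
            VecN N n × VecN N m × Vec n) - (x, y, σ)
            = (-(g + uw.1), 0, Mavg (x - (g + uw.1)) - σ) := by
          ext <;> simp
        rw [e1] at h
        simp only [dotN_neg', dotN_zero', zero_dot'] at h
        linarith
      -- Step B : uw.2 is block-constant
      set i0 : Fin N := ⟨0, hN⟩ with hi0
      have hconst : ∀ i j, uw.2 i j = uw.2 i0 j := by
        intro i j
        by_cases hi : i = i0
        · rw [hi]
        · have key : ∀ t : ℝ, 0 ≤ (uw.2 i j - uw.2 i0 j) * t := by
            intro t
            set d : VecN N m := fun l =>
              (if l = i then sgl j t else 0) - (if l = i0 then sgl j t else 0) with hd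
            have hfeas : ∀ j', Psum (y + d) j' ≤ 0 := by
              intro j'
              have : Psum (y + d) j' = Psum y j' := by
                simp only [psum_apply, Pi.add_apply, hd, Pi.sub_apply,
                  Finset.sum_add_distrib]
                have : (∑ l, (((if l = i then sgl j t else 0) : Vec m) j'
                    - ((if l = i0 then sgl j t else 0) : Vec m) j')) = 0 := by
                  simp [apply_ite (fun v : Vec m => v j'), Finset.sum_sub_distrib,
                    Finset.sum_ite_eq']
                rw [this, add_zero]
              rw [this]; exact hPy j'
            have h := hviY d hfeas
            have hterm : ∀ l, dot (uw.2 l) (d l) =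
                (if l = i then uw.2 i j * t else 0)
                  - (if l = i0 then uw.2 i0 j * t else 0) := by
              intro l
              simp only [hd, Pi.sub_apply, dot_sub']
              congr 1
              · split
                · next hli => subst hli; rw [dot_sgl]
                · exact dot_zero' _
              · split
                · next hli => subst hli; rw [dot_sgl]
                · exact dot_zero' _
            have e : dotN uw.2 d = (uw.2 i j - uw.2 i0 j) * t := by
              simp only [dotN]
              rw [Finset.sum_congr rfl fun l _ => hterm l, Finset.sum_sub_distrib]
              simp [Finset.sum_ite_eq']
              ring
            rw [e] at h; exact h
          have h1 := key 1
          have h2 := key (-1)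
          nlinarith
      -- Step C : sign
      have hsign : ∀ j, uw.2 i0 j ≤ 0 := by
        intro j
        set d : VecN N m := fun l => if l = i0 then sgl j (-1) else 0 with hd
        have hfeas : ∀ j', Psum (y + d) j' ≤ 0 := by
          intro j'
          have : Psum (y + d) j' = Psum y j' + sgl j (-1) j' := by
            simp [psum_apply, hd, Finset.sum_add_distrib,
              apply_ite (fun v : Vec m => v j'), Finset.sum_ite_eq']
          rw [this]
          have : sgl j (-1) j' ≤ 0 := by simp [sgl]; split <;> norm_num
          linarith [hPy j']
        have h := hviY d hfeas
        have hterm : ∀ l, dot (uw.2 l) (d l) =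
            if l = i0 then -(uw.2 i0 j) else 0 := by
          intro l
          simp only [hd]
          split
          · next hli => subst hli; rw [dot_sgl]; ring
          · exact dot_zero' _
        have e : dotN uw.2 d = -(uw.2 i0 j) := by
          simp only [dotN]
          rw [Finset.sum_congr rfl fun l _ => hterm l]
          simp [Finset.sum_ite_eq']
        rw [e] at h; linarith
      -- Step D : complementarity
      have hcomp : dot (uw.2 i0) (Psum y) = 0 := by
        have h := hviY (-y) (by intro j'; simp [psum_apply])
        have e : dotN uw.2 (-y) = -(dot (uw.2 i0) (Psum y)) := by
          rw [dotN_neg']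
          congr 1
          rw [← dot_psum]
          apply Finset.sum_congr rfl
          intro l _
          simp only [dot]
          exact Finset.sum_congr rfl fun j _ => by rw [hconst l j]
        rw [e] at h
        have h2 : 0 ≤ dot (uw.2 i0) (Psum y) :=
          Finset.sum_nonneg fun j _ => mul_nonneg_iff.mpr (Or.inr ⟨hsign j, hPy j⟩)
        linarith
      -- assemble
      refine ⟨fun j => -(uw.2 i0 j), fun j => neg_nonneg.mpr (hsign j),
        g, hg, uw, huw, Psum y, ⟨fun j => neg_nonneg.mpr (hsign j), ?_⟩,
        ?_, ?_, rfl, sub_eq_zero.mpr hσ.symm, sub_self _⟩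
      · intro z hz
        rw [dot_sub']
        have e1 : dot (Psum y) (fun j => -(uw.2 i0 j)) = 0 := by
          have : dot (Psum y) (fun j => -(uw.2 i0 j)) = -(dot (uw.2 i0) (Psum y)) := by
            simp only [dot, ← Finset.sum_neg_distrib]
            exact Finset.sum_congr rfl fun j _ => by ring
          rw [this, hcomp, neg_zero]
        have e2 : dot (Psum y) z ≤ 0 :=
          Finset.sum_nonpos fun j _ => mul_nonpos_iff.mpr (Or.inr ⟨hPy j, hz j⟩)
        linarith
      · rw [mavgT_zero, sub_zero]; exact hGzero
      · funext l j
        simp only [Pi.add_apply, PsumT, Pi.zero_apply]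
        rw [hconst l j]; ring
    · rintro ⟨lam, hlam, g, hg, uw, huw, v, hv, h1, h2, -, h4, h5⟩
      have hG : g + uw.1 = 0 := by rwa [mavgT_zero, sub_zero] at h1
      have hw : ∀ i, uw.2 i = -lam := by
        intro i
        have := congrFun h2 i
        simp only [Pi.add_apply, PsumT, Pi.zero_apply] at this
        exact eq_neg_of_add_eq_zero_left this
      have hvPy : v = Psum y := sub_eq_zero.mp h5
      obtain ⟨hlamO, hvle⟩ := hv
      have hvle0 : ∀ j, v j ≤ 0 := by
        intro j
        have hz : (lam + sgl j 1) ∈ orthant m := by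
          intro j'; simp only [Pi.add_apply, sgl]
          have := hlam j'
          split <;> linarith
        have := hvle _ hz
        rw [add_sub_cancel_left, dot_sgl, mul_one] at this
        exact this
      have hvlam : dot v lam = 0 := by
        have h0 := hvle 0 (fun j => le_rfl)
        rw [zero_sub, dot_comm'] at h0
        rw [neg_dot'] at h0
        have h2' := hvle (lam + lam) (fun j => by have := hlam j; simp; linarith)
        rw [add_sub_cancel_right] at h2'
        rw [dot_comm'] at h2'
        rw [dot_comm']
        linarith
      have hPy : ∀ j, Psum y j ≤ 0 := fun j => hvPy ▸ hvle0 j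
      refine ⟨⟨hPy, (sub_eq_zero.mp h4).symm⟩, (g + uw.1, uw.2, 0),
        ⟨g, hg, uw, huw, rfl⟩, ?_⟩
      rintro ⟨x', y', σ'⟩ ⟨hy', -⟩
      simp only [ip3, Prod.mk_sub_mk, hG, zero_dotN', zero_dot', zero_add, add_zero]
      have e : dotN uw.2 (y' - y) = dot lam (Psum y) - dot lam (Psum y') := by
        simp only [dotN, Pi.sub_apply]
        have : ∀ i, dot (uw.2 i) (y' i - y i) = dot lam (y i) - dot lam (y' i) := by
          intro i
          rw [hw i, neg_dot', dot_sub']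
          ring
        rw [Finset.sum_congr rfl fun i _ => this i, Finset.sum_sub_distrib,
          dot_psum, dot_psum]
      rw [e]
      have e1 : dot lam (Psum y) = 0 := by rw [dot_comm', ← hvPy]; exact hvlam
      have e2 : dot lam (Psum y') ≤ 0 :=
        Finset.sum_nonpos fun j _ => mul_nonpos_iff.mpr (Or.inl ⟨hlam j, hy' j⟩)
      linarith
  · rintro x y σ μ lam ⟨g, hg, uw, huw, v, hv, h1, h2, h3, h4, h5⟩
    exact ⟨h3, (sub_eq_zero.mp h4).symm, fun i => (huw.1 i).2⟩
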